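/- Let c00,c01,c10,c11 and b00,b01,b10,b11 be real numbers with K := b10 − c10 − b00 + c00 > 0, and let P11, P10 be real numbers with t := P11 − P10. Then E[P|w=1] > E[P|w=0] if and only if t > γ + δ·P11. (The cost-sensitive causal classification decision boundary, Equation 16, derived from Equation 14.) -/

import Mathlib

/-- the cost-sensitive causal classification decision boundary. -/
theorem cost_sensitive_causal_boundary (c00 c01 c10 c11 b00 b01 b10 b11 P11 P10 : ℝ)
    (hK : b10 - c10 - b00 + c00 > 0) :
    P11 * (b11 - c11) + (1 - P11) * (b01 - c01) >
        P10 * (b10 - c10) + (1 - P10) * (b00 - c00) ↔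
      P11 - P10 >
        (b00 - c00 - b01 + c01) / (b10 - c10 - b00 + c00) +
          (b10 - c10 + b01 - c01 - b11 + c11 - b00 + c00) / (b10 - c10 - b00 + c00) * P11 := by
  rw [gt_iff_lt, gt_iff_lt, div_mul_eq_mul_div, ← add_div, div_lt_iff₀ hK]
  constructor <;> intro h <;> nlinarith [h]
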